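/- arXiv:2003.04658 — 2 statements merged into one kernel-verified Lean document; each statement's English description precedes it below -/
import Mathlib

section
/- Under the same assumptions, the minimum over Φ of (αC + γβS) equals −√(max(α_lo², α_hi²) + (max Γ)² · max(0, −β_lo)²). -/
set_option maxHeartbeats 800000


theorem min_over_Phi (αlo αhi βlo βhi : ℝ) (Γ : Finset ℝ)
    (hα : αlo ≤ αhi) (hβ : βlo ≤ βhi) (hΓ : Γ.Nonempty)
    (hΓpos : ∀ γ ∈ Γ, 0 ≤ γ) :
    IsLeast {x : ℝ | ∃ α β γ C S : ℝ, α ∈ Set.Icc αlo αhi ∧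
        β ∈ Set.Icc βlo βhi ∧ γ ∈ Γ ∧ C ^ 2 + S ^ 2 = 1 ∧ 0 ≤ S ∧
        x = α * C + γ * β * S}
      (-Real.sqrt (max (αlo ^ 2) (αhi ^ 2) +
        (Γ.max' hΓ) ^ 2 * max 0 (-βlo) ^ 2)) := by
  set M := Γ.max' hΓ with hM
  set A := max (αlo ^ 2) (αhi ^ 2) with hA
  set b := max 0 (-βlo) with hb
  have hM0 : 0 ≤ M := hΓpos _ (Γ.max'_mem hΓ)
  have hb0 : 0 ≤ b := le_max_left _ _
  have hA0 : 0 ≤ A := le_trans (sq_nonneg αlo) (le_max_left _ _)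
  have hsum0 : 0 ≤ A + M ^ 2 * b ^ 2 := by positivity
  set r := Real.sqrt (A + M ^ 2 * b ^ 2) with hr
  have hr2 : r ^ 2 = A + M ^ 2 * b ^ 2 := Real.sq_sqrt hsum0
  have hr0 : 0 ≤ r := Real.sqrt_nonneg _
  have hβb : βlo * b = -b ^ 2 := by
    rcases le_or_gt βlo 0 with h | h
    · have : b = -βlo := max_eq_right (by linarith)
      rw [this]; ring
    · have : b = 0 := max_eq_left (by linarith)
      rw [this]; ring
  constructor
  · -- membership
    rcases eq_or_lt_of_le hr0 with hrz | hrpos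
    · -- r = 0 : then A = 0 and M*b = 0
      have h0 : A + M ^ 2 * b ^ 2 = 0 := by
        have := hr2; rw [← hrz] at this; linarith [this]
      have hA0' : A = 0 := by nlinarith [sq_nonneg (M * b)]
      have hMb : M ^ 2 * b ^ 2 = 0 := by linarith
      have hαlo : αlo = 0 := by
        have : αlo ^ 2 ≤ 0 := by
          have := le_max_left (αlo ^ 2) (αhi ^ 2); linarith
        nlinarith [sq_nonneg αlo]
      have hαhi : αhi = 0 := by
        have : αhi ^ 2 ≤ 0 := by
          have := le_max_right (αlo ^ 2) (αhi ^ 2); linarith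
        nlinarith [sq_nonneg αhi]
      refine ⟨0, βlo, M, 1, 0, ⟨by rw [hαlo], by rw [hαhi]⟩,
        ⟨le_refl _, hβ⟩, Γ.max'_mem hΓ, by norm_num, le_refl _, ?_⟩
      rw [← hrz]; ring
    · -- r > 0
      have hrne : r ≠ 0 := ne_of_gt hrpos
      set a := if αlo ^ 2 ≥ αhi ^ 2 then αlo else αhi with ha
      have ha2 : a ^ 2 = A := by
        rw [ha, hA]; split_ifs with h
        · exact (max_eq_left h).symm
        · exact (max_eq_right (le_of_lt (lt_of_not_ge h))).symm
      have hamem : a ∈ Set.Icc αlo αhi := by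
        rw [ha]; split_ifs <;> exact ⟨by linarith, by linarith⟩
      refine ⟨a, βlo, M, -a / r, M * b / r, hamem, ⟨le_refl _, hβ⟩,
        Γ.max'_mem hΓ, ?_, by positivity, ?_⟩
      · field_simp
        linear_combination ha2 - hr2
      · field_simp
        linear_combination -hr2 + ha2 - M^2*hβb
  · -- lower bound
    rintro x ⟨α, β, γ, C, S, ⟨hαl, hαh⟩, ⟨hβl, hβh⟩, hγ, hCS, hS, rfl⟩
    have hγ0 : 0 ≤ γ := hΓpos _ hγ
    have hγM : γ ≤ M := Γ.le_max' _ hγ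
    have hα2 : α ^ 2 ≤ A := by
      rcases le_or_gt 0 α with h | h
      · have : α ^ 2 ≤ αhi ^ 2 := by nlinarith
        exact le_trans this (le_max_right _ _)
      · have : α ^ 2 ≤ αlo ^ 2 := by nlinarith
        exact le_trans this (le_max_left _ _)
    have hαabs : |α| ≤ Real.sqrt A := by
      rw [← Real.sqrt_sq_eq_abs]
      exact Real.sqrt_le_sqrt hα2
    have hsA : Real.sqrt A ^ 2 = A := Real.sq_sqrt hA0
    have hsA0 : 0 ≤ Real.sqrt A := Real.sqrt_nonneg _
    have h1 : -(α * C) ≤ Real.sqrt A * |C| := by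
      have : -(α * C) ≤ |α| * |C| := by
        rw [← abs_mul]
        exact neg_le_abs _
      exact le_trans this (mul_le_mul_of_nonneg_right hαabs (abs_nonneg _))
    have hβb' : -β ≤ b := le_trans (by linarith) (le_max_right 0 (-βlo))
    have h2 : -(γ * β * S) ≤ M * b * S := by
      have h3 : γ * (-β) ≤ M * b := by nlinarith
      nlinarith
    set t := Real.sqrt A * |C| + M * b * S with ht
    have ht0 : 0 ≤ t := by positivity
    have ht2 : t ^ 2 ≤ A + M ^ 2 * b ^ 2 := by
      have hC2 : |C| ^ 2 = C ^ 2 := sq_abs C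
      nlinarith [sq_nonneg (Real.sqrt A * S - M * b * |C|), abs_nonneg C]
    have htr : t ≤ r := by
      have := Real.sqrt_le_sqrt ht2
      rwa [Real.sqrt_sq ht0] at this
    linarith [h1, h2, htr]
end

section
/- Let a_s be a complex number with Re(a_s) > 0, and let a_H > 1, a_L > 1 be reals. For each N ≥ 1, define D_N = |a_s|²/P_N² + P_N² + 2Re(a_s), where P_N = a_H^⌈N/2⌉ · a_L^⌊N/2⌋. Then D_N → ∞ as N → ∞, and consequently 1 − 4Re(a_s)/D_N → 1 as N → ∞. -/
open Filter

theorem heuristic_reflectance_tendsto_one (as : ℂ) (aH aL : ℝ)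
    (hre : 0 < as.re) (hH : 1 < aH) (hL : 1 < aL) :
    Tendsto (fun N : ℕ =>
        Complex.normSq as / (aH ^ ((N + 1) / 2) * aL ^ (N / 2)) ^ 2 +
          (aH ^ ((N + 1) / 2) * aL ^ (N / 2)) ^ 2 + 2 * as.re)
      atTop atTop ∧
    Tendsto (fun N : ℕ => 1 - 4 * as.re /
        (Complex.normSq as / (aH ^ ((N + 1) / 2) * aL ^ (N / 2)) ^ 2 +
          (aH ^ ((N + 1) / 2) * aL ^ (N / 2)) ^ 2 + 2 * as.re))
      atTop (nhds 1) := by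
  set c : ℝ := min aH aL with hc
  have hc1 : 1 < c := lt_min hH hL
  have hc0 : 0 < c := lt_trans one_pos hc1
  have hP : Tendsto (fun N : ℕ => aH ^ ((N + 1) / 2) * aL ^ (N / 2)) atTop atTop := by
    apply tendsto_atTop_mono (f := fun N : ℕ => c ^ N)
    · intro N
      have h1 : c ^ ((N + 1) / 2) ≤ aH ^ ((N + 1) / 2) :=
        pow_le_pow_left₀ hc0.le (min_le_left _ _) _
      have h2 : c ^ (N / 2) ≤ aL ^ (N / 2) :=
        pow_le_pow_left₀ hc0.le (min_le_right _ _) _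
      calc c ^ N = c ^ ((N + 1) / 2) * c ^ (N / 2) := by
            rw [← pow_add]
            congr 1
            omega
        _ ≤ aH ^ ((N + 1) / 2) * aL ^ (N / 2) :=
            mul_le_mul h1 h2 (pow_nonneg hc0.le _) (pow_nonneg (lt_trans one_pos hH).le _)
    · exact tendsto_pow_atTop_atTop_of_one_lt hc1
  have hP2 : Tendsto (fun N : ℕ => (aH ^ ((N + 1) / 2) * aL ^ (N / 2)) ^ 2) atTop atTop :=
    (tendsto_pow_atTop two_ne_zero).comp hP
  have hD : Tendsto (fun N : ℕ =>
      Complex.normSq as / (aH ^ ((N + 1) / 2) * aL ^ (N / 2)) ^ 2 +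
        (aH ^ ((N + 1) / 2) * aL ^ (N / 2)) ^ 2 + 2 * as.re) atTop atTop := by
    apply tendsto_atTop_add_const_right
    apply Filter.Tendsto.nonneg_add_atTop _ hP2
    intro N
    have hPpos : 0 < aH ^ ((N + 1) / 2) * aL ^ (N / 2) :=
      mul_pos (pow_pos (lt_trans one_pos hH) _) (pow_pos (lt_trans one_pos hL) _)
    exact div_nonneg (Complex.normSq_nonneg as) (sq_nonneg _)
  refine ⟨hD, ?_⟩
  have : Tendsto (fun N : ℕ => 4 * as.re /
      (Complex.normSq as / (aH ^ ((N + 1) / 2) * aL ^ (N / 2)) ^ 2 +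
        (aH ^ ((N + 1) / 2) * aL ^ (N / 2)) ^ 2 + 2 * as.re)) atTop (nhds 0) :=
    Tendsto.div_atTop tendsto_const_nhds hD
  simpa using tendsto_const_nhds.sub this
end
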